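/- Every nonzero 2×2 integer matrix X with X² = 0 and whose entries have gcd 1 is conjugate over GL₂(ℤ) to the matrix E = [[0, -1], [0, 0]]. -/

import Mathlib

lemma key (a b c u1 u2 s t ε : ℤ) (hε : ε * ε = 1)
    (ha : a = -(ε*u1*u2)) (hb : b = ε*(u1*u1)) (hc : c = -(ε*(u2*u2)))
    (hst : s*u1 + t*u2 = 1) :
    ∃ T : GL (Fin 2) ℤ, !![a,b;c,-a] =
      (T : Matrix (Fin 2) (Fin 2) ℤ) * !![0,-1;0,0] *
        ((T⁻¹ : GL (Fin 2) ℤ) : Matrix (Fin 2) (Fin 2) ℤ) := by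
  refine ⟨⟨!![u1, ε*t; u2, -(ε*s)], !![s, t; ε*u2, -(ε*u1)], ?_, ?_⟩, ?_⟩
  · ext i j
    fin_cases i <;> fin_cases j <;>
      simp [Matrix.mul_apply, Fin.sum_univ_two, Matrix.one_apply] <;>
      first
        | linear_combination hst + t*u2*hε
        | linear_combination -(t*u1)*hε
        | linear_combination -(s*u2)*hε
        | linear_combination hst + s*u1*hε
  · ext i j
    fin_cases i <;> fin_cases j <;>
      simp [Matrix.mul_apply, Fin.sum_univ_two, Matrix.one_apply] <;>
      first
        | linear_combination hst
        | linear_combination -hst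
        | linear_combination (u2*t+u1*s)*hε + hst
        | ring
  · show _ = _ * _ * !![s, t; ε*u2, -(ε*u1)]
    ext i j
    fin_cases i <;> fin_cases j <;>
      simp [Matrix.mul_apply, Fin.sum_univ_two] <;>
      first
        | linear_combination ha
        | linear_combination hb
        | linear_combination hc
        | linear_combination -ha

theorem stmt_6 (X : Matrix (Fin 2) (Fin 2) ℤ) (hX : X ≠ 0) (h : X * X = 0)
    (hgcd : Int.gcd (Int.gcd (X 0 0) (X 0 1)) (Int.gcd (X 1 0) (X 1 1)) = 1) :
    ∃ T : GL (Fin 2) ℤ,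
      X = (T : Matrix (Fin 2) (Fin 2) ℤ) * !![0, -1; 0, 0] * ((T⁻¹ : GL (Fin 2) ℤ) : Matrix (Fin 2) (Fin 2) ℤ) := by
  obtain ⟨a, b, c, d, hXe⟩ : ∃ a b c d, X = !![a,b;c,d] := ⟨_,_,_,_, Matrix.eta_fin_two X⟩
  subst hXe
  have hgcd : Int.gcd (Int.gcd a b) (Int.gcd c d) = 1 := by simpa using hgcd
  have h00 : a*a + b*c = 0 := by
    simpa [Matrix.mul_apply, Fin.sum_univ_two] using congrFun (congrFun h 0) 0
  have h01 : a*b + b*d = 0 := by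
    simpa [Matrix.mul_apply, Fin.sum_univ_two] using congrFun (congrFun h 0) 1
  have h10 : c*a + d*c = 0 := by
    simpa [Matrix.mul_apply, Fin.sum_univ_two] using congrFun (congrFun h 1) 0
  have h11 : c*b + d*d = 0 := by
    simpa [Matrix.mul_apply, Fin.sum_univ_two] using congrFun (congrFun h 1) 1
  have had : d = -a := by
    by_contra hd
    have had : a + d ≠ 0 := fun hh => hd (by linarith)
    have hb0 : b = 0 := by
      rcases mul_eq_zero.mp (show b * (a + d) = 0 by linear_combination h01) with h' | h'
      · exact h'
      · exact absurd h' had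
    have hc0 : c = 0 := by
      rcases mul_eq_zero.mp (show c * (a + d) = 0 by linear_combination h10) with h' | h'
      · exact h'
      · exact absurd h' had
    have ha0 : a = 0 := by
      have : a * a = 0 := by linear_combination h00 - c * hb0
      exact mul_self_eq_zero.mp this
    have hd0 : d = 0 := by
      have : d * d = 0 := by linear_combination h11 - b * hc0
      exact mul_self_eq_zero.mp this
    exact had (by rw [ha0, hd0]; ring)
  subst had
  -- now show b and c are coprime
  have hco : IsCoprime b c := by
    rw [Int.isCoprime_iff_gcd_eq_one, Nat.eq_one_iff_not_exists_prime_dvd]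
    intro p hp hpd
    have hpZ : Prime (p : ℤ) := Nat.prime_iff_prime_int.mp hp
    have hpb : (p : ℤ) ∣ b := (Int.natCast_dvd_natCast.mpr hpd).trans (Int.gcd_dvd_left _ _)
    have hpc : (p : ℤ) ∣ c := (Int.natCast_dvd_natCast.mpr hpd).trans (Int.gcd_dvd_right _ _)
    have hpa : (p : ℤ) ∣ a := by
      refine hpZ.dvd_of_dvd_pow (n := 2) ?_
      rw [show a^2 = -(b*c) by linear_combination h00]
      exact dvd_neg.mpr (hpb.mul_right c)
    have h1 : (p : ℤ) ∣ (Int.gcd a b : ℤ) := Int.dvd_coe_gcd hpa hpb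
    have h2 : (p : ℤ) ∣ (Int.gcd c (-a) : ℤ) := Int.dvd_coe_gcd hpc (dvd_neg.mpr hpa)
    have h3 : (p : ℤ) ∣ (Int.gcd (Int.gcd a b : ℤ) (Int.gcd c (-a) : ℤ) : ℤ) :=
      Int.dvd_coe_gcd h1 h2
    rw [hgcd] at h3
    have hp1 : p ∣ 1 := by exact_mod_cast h3
    exact hp.ne_one (Nat.dvd_one.mp hp1)
  have hbc : b * -c = a ^ 2 := by linear_combination -h00
  obtain ⟨r, hr⟩ := Int.sq_of_isCoprime hco.neg_right hbc
  rcases eq_or_ne r 0 with h0 | h0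
  · have hb0 : b = 0 := by rcases hr with hr | hr <;> rw [hr, h0] <;> ring
    have ha0 : a = 0 := by
      have : a * a = 0 := by linear_combination h00 - c * hb0
      exact mul_self_eq_zero.mp this
    have hcu : IsUnit c := isCoprime_zero_left.mp (hb0 ▸ hco)
    rcases Int.isUnit_iff.mp hcu with hc1 | hc1
    · exact key a b c 0 1 0 1 (-1) (by ring) (by rw [ha0]; ring) (by rw [hb0]; ring)
        (by rw [hc1]; ring) (by ring)
    · exact key a b c 0 1 0 1 1 (by ring) (by rw [ha0]; ring) (by rw [hb0]; ring)
        (by rw [hc1]; ring) (by ring)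
  · rcases hr with hr | hr
    · have hr2 : r^2 * (-c) = a^2 := by rw [← hr]; exact hbc
      have hra : r ∣ a := (Int.pow_dvd_pow_iff two_ne_zero).mp ⟨-c, hr2.symm⟩
      obtain ⟨m, hm⟩ := hra
      have hcm : -c = m^2 := by
        refine mul_left_cancel₀ (pow_ne_zero 2 h0) ?_
        rw [hr2, hm]; ring
      have hcop : IsCoprime r (-m) :=
        ((hco.neg_right.of_isCoprime_of_dvd_left ⟨r, by rw [hr]; ring⟩).of_isCoprime_of_dvd_right
          ⟨m, by rw [hcm]; ring⟩).neg_right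
      obtain ⟨s, t, hst⟩ := hcop
      exact key a b c r (-m) s t 1 (by ring) (by linear_combination hm)
        (by linear_combination hr) (by linear_combination -hcm) hst
    · have hr2 : r^2 * c = a^2 := by linear_combination hbc + c*hr
      have hra : r ∣ a := (Int.pow_dvd_pow_iff two_ne_zero).mp ⟨c, hr2.symm⟩
      obtain ⟨m, hm⟩ := hra
      have hcm : c = m^2 := by
        refine mul_left_cancel₀ (pow_ne_zero 2 h0) ?_
        rw [hr2, hm]; ring
      have hcop : IsCoprime r m :=
        (hco.neg_right.of_isCoprime_of_dvd_left ⟨-r, by rw [hr]; ring⟩).of_isCoprime_of_dvd_right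
          ⟨-m, by rw [hcm]; ring⟩
      obtain ⟨s, t, hst⟩ := hcop
      exact key a b c r m s t (-1) (by ring) (by linear_combination hm)
        (by linear_combination hr) (by linear_combination hcm) hst
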